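/- Let H be a self-adjoint operator on a Hilbert space, bounded above, with Tr(e^A) < ∞ for A = -βH, and let B be a bounded self-adjoint operator. Then Tr(e^A B)/Tr(e^A) ≤ log( Tr(e^{A+B}) / Tr(e^A) ). (Peierls–Bogolyubov inequality, trace form.) -/

import Mathlib

open Matrix Finset

namespace PBaux

variable {n : ℕ}

lemma exp_eq {A : Matrix (Fin n) (Fin n) ℂ} (hA : A.IsHermitian) :
    NormedSpace.exp A =
      (hA.eigenvectorUnitary : Matrix (Fin n) (Fin n) ℂ) *
        Matrix.diagonal (fun i => (Real.exp (hA.eigenvalues i) : ℂ)) *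
        star (hA.eigenvectorUnitary : Matrix (Fin n) (Fin n) ℂ) := by
  set U : Matrix (Fin n) (Fin n) ℂ := (hA.eigenvectorUnitary : Matrix (Fin n) (Fin n) ℂ) with hU
  have hU1 : U * star U = 1 := Matrix.mem_unitaryGroup_iff.mp hA.eigenvectorUnitary.2
  have hUinv : U⁻¹ = star U := Matrix.inv_eq_right_inv hU1
  have hUunit : IsUnit U := ⟨Unitary.toUnits hA.eigenvectorUnitary, rfl⟩
  conv_lhs => rw [hA.spectral_theorem, Unitary.conjStarAlgAut_apply, ← hU, ← hUinv, Matrix.exp_conj U _ hUunit,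
    Matrix.exp_diagonal, hUinv]
  congr 2
  ext i
  simp [Pi.exp_def, Function.comp, ← Complex.exp_eq_exp_ℂ, ← Complex.ofReal_exp]

lemma trace_exp_eq {A : Matrix (Fin n) (Fin n) ℂ} (hA : A.IsHermitian) :
    Matrix.trace (NormedSpace.exp A) = ((∑ i, Real.exp (hA.eigenvalues i) : ℝ) : ℂ) := by
  set U : Matrix (Fin n) (Fin n) ℂ := (hA.eigenvectorUnitary : Matrix (Fin n) (Fin n) ℂ) with hU
  have hU1 : star U * U = 1 := Matrix.mem_unitaryGroup_iff'.mp hA.eigenvectorUnitary.2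
  rw [exp_eq hA, Matrix.trace_mul_comm, ← Matrix.mul_assoc, hU1, Matrix.one_mul,
    Matrix.trace_diagonal]
  push_cast
  rfl

/-- Jensen's inequality for `Real.exp`. -/
lemma exp_sum_le {ι : Type*} (s : Finset ι) (w x : ι → ℝ) (hw : ∀ i ∈ s, 0 ≤ w i)
    (h1 : ∑ i ∈ s, w i = 1) :
    Real.exp (∑ i ∈ s, w i * x i) ≤ ∑ i ∈ s, w i * Real.exp (x i) := by
  simpa [smul_eq_mul] using convexOn_exp.map_sum_le hw h1 (fun i _ => Set.mem_univ (x i))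

end PBaux


/-- **Peierls–Bogolyubov inequality** (trace form), formalized for Hermitian
matrices on a finite-dimensional Hilbert space `ℂ^n` (where every self-adjoint
operator bounded above with trace-class exponential is of this form):
`Tr(e^A B)/Tr(e^A) ≤ log (Tr(e^{A+B})/Tr(e^A))` for `A` self-adjoint
(here `A = -βH`) and `B` bounded self-adjoint. -/
theorem peierls_bogolyubov {n : ℕ} (hn : 0 < n)
    (A B : Matrix (Fin n) (Fin n) ℂ) (hA : A.IsHermitian) (hB : B.IsHermitian) :
    (Matrix.trace (NormedSpace.exp A * B)).re / (Matrix.trace (NormedSpace.exp A)).re ≤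
      Real.log ((Matrix.trace (NormedSpace.exp (A + B))).re /
        (Matrix.trace (NormedSpace.exp A)).re) := by
  classical
  have hM : (A + B).IsHermitian := hA.add hB
  set U : Matrix (Fin n) (Fin n) ℂ := (hA.eigenvectorUnitary : Matrix (Fin n) (Fin n) ℂ) with hUdef
  set V : Matrix (Fin n) (Fin n) ℂ := (hM.eigenvectorUnitary : Matrix (Fin n) (Fin n) ℂ) with hVdef
  set a : Fin n → ℝ := hA.eigenvalues with hadef
  set m : Fin n → ℝ := hM.eigenvalues with hmdef
  have hRC : (RCLike.ofReal : ℝ → ℂ) = Complex.ofReal := rfl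
  have hU1 : U * star U = 1 := Matrix.mem_unitaryGroup_iff.mp hA.eigenvectorUnitary.2
  have hU1' : star U * U = 1 := Matrix.mem_unitaryGroup_iff'.mp hA.eigenvectorUnitary.2
  have hV1 : V * star V = 1 := Matrix.mem_unitaryGroup_iff.mp hM.eigenvectorUnitary.2
  have hV1' : star V * V = 1 := Matrix.mem_unitaryGroup_iff'.mp hM.eigenvectorUnitary.2
  set W : Matrix (Fin n) (Fin n) ℂ := star V * U with hWdef
  have hW1' : star W * W = 1 := by
    rw [hWdef, Matrix.star_mul, star_star, Matrix.mul_assoc, ← Matrix.mul_assoc V, hV1,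
      Matrix.one_mul, hU1']
  have hW1 : W * star W = 1 := by
    rw [hWdef, Matrix.star_mul, star_star, Matrix.mul_assoc, ← Matrix.mul_assoc U, hU1,
      Matrix.one_mul, hV1']
  set p : Fin n → Fin n → ℝ := fun j i => Complex.normSq (W j i) with hpdef
  have hpnn : ∀ j i, 0 ≤ p j i := fun j i => Complex.normSq_nonneg _
  have pcol : ∀ i, ∑ j, p j i = 1 := by
    intro i
    have h := congrArg (fun M : Matrix (Fin n) (Fin n) ℂ => M i i) hW1'
    simp only [Matrix.mul_apply, Matrix.one_apply_eq, Matrix.conjTranspose_apply] at h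
    have h2 : ((∑ j, p j i : ℝ) : ℂ) = 1 := by
      push_cast
      rw [← h]
      refine Finset.sum_congr rfl fun j _ => ?_
      rw [hpdef]
      simp [Complex.normSq_eq_conj_mul_self]
    exact_mod_cast h2
  have prow : ∀ j, ∑ i, p j i = 1 := by
    intro j
    have h := congrArg (fun M : Matrix (Fin n) (Fin n) ℂ => M j j) hW1
    simp only [Matrix.mul_apply, Matrix.one_apply_eq, Matrix.conjTranspose_apply] at h
    have h2 : ((∑ i, p j i : ℝ) : ℂ) = 1 := by
      push_cast
      rw [← h]
      refine Finset.sum_congr rfl fun i _ => ?_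
      rw [hpdef]
      simp [Complex.mul_conj]
    exact_mod_cast h2
  set b : Fin n → ℝ := fun i => ((star U * B * U) i i).re with hbdef
  have hdiagA : star U * A * U = Matrix.diagonal (fun i => (a i : ℂ)) := by
    have h := hA.conjStarAlgAut_star_eigenvectorUnitary
    simp only [Unitary.conjStarAlgAut_apply, Unitary.coe_star, star_star] at h
    rw [← hUdef, ← hadef] at h
    rw [h]
    rfl
  have hc : ∀ i, ((star U * (A + B) * U) i i).re = a i + b i := by
    intro i
    have h : star U * (A + B) * U = star U * A * U + star U * B * U := by
      rw [Matrix.mul_add, Matrix.add_mul]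
    rw [h, Matrix.add_apply, Complex.add_re, hdiagA]
    simp
    rfl
  have hcp : ∀ i, ((star U * (A + B) * U) i i) = ((∑ j, m j * p j i : ℝ) : ℂ) := by
    intro i
    have hAB : A + B = V * Matrix.diagonal (fun j => (m j : ℂ)) * star V := by
      have h := hM.spectral_theorem
      simp only [Unitary.conjStarAlgAut_apply, Unitary.coe_star] at h
      rw [← hVdef, ← hmdef] at h
      exact h
    have key : star U * (A + B) * U = star W * Matrix.diagonal (fun j => (m j : ℂ)) * W := by
      rw [hAB, hWdef, Matrix.star_mul, star_star]
      simp only [Matrix.mul_assoc]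
    rw [key]
    rw [Matrix.mul_apply]
    push_cast
    refine Finset.sum_congr rfl fun j _ => ?_
    rw [Matrix.mul_diagonal, Matrix.star_apply]
    rw [hpdef]
    simp only [Complex.star_def]
    rw [mul_comm ((starRingEnd ℂ) (W j i)) _, mul_assoc, ← Complex.normSq_eq_conj_mul_self]
  have peierls : ∑ i, Real.exp (a i + b i) ≤ ∑ j, Real.exp (m j) := by
    have keyi : ∀ i, a i + b i = ∑ j, p j i * m j := by
      intro i
      have h2 := congrArg Complex.re (hcp i)
      rw [Complex.ofReal_re] at h2
      rw [← hc i, h2]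
      exact Finset.sum_congr rfl fun j _ => mul_comm _ _
    calc ∑ i, Real.exp (a i + b i) ≤ ∑ i, ∑ j, p j i * Real.exp (m j) := by
          refine Finset.sum_le_sum fun i _ => ?_
          rw [keyi i]
          exact PBaux.exp_sum_le _ _ _ (fun j _ => hpnn j i) (pcol i)
      _ = ∑ j, Real.exp (m j) := by
          rw [Finset.sum_comm]
          refine Finset.sum_congr rfl fun j _ => ?_
          rw [← Finset.sum_mul, prow j, one_mul]
  have hTA : (Matrix.trace (NormedSpace.exp A)).re = ∑ i, Real.exp (a i) := by
    rw [PBaux.trace_exp_eq hA, Complex.ofReal_re]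
  have hTM : (Matrix.trace (NormedSpace.exp (A + B))).re = ∑ j, Real.exp (m j) := by
    rw [PBaux.trace_exp_eq hM, Complex.ofReal_re]
  have hTAB : (Matrix.trace (NormedSpace.exp A * B)).re = ∑ i, Real.exp (a i) * b i := by
    rw [PBaux.exp_eq hA, ← hUdef, ← hadef]
    have h2 : U * Matrix.diagonal (fun i => (Real.exp (a i) : ℂ)) * star U * B
        = (U * Matrix.diagonal (fun i => (Real.exp (a i) : ℂ))) * (star U * B) := by
      rw [Matrix.mul_assoc]
    rw [h2, Matrix.trace_mul_comm, ← Matrix.mul_assoc]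
    rw [show Matrix.trace (star U * B * U * Matrix.diagonal (fun i => (Real.exp (a i) : ℂ)))
        = ∑ i, (star U * B * U) i i * (Real.exp (a i) : ℂ) by
      simp [Matrix.trace, Matrix.diag, Matrix.mul_diagonal]]
    rw [Complex.re_sum]
    refine Finset.sum_congr rfl fun i _ => ?_
    rw [mul_comm, Complex.re_ofReal_mul, hbdef]
  -- final assembly
  set Z : ℝ := ∑ i, Real.exp (a i) with hZdef
  have hZ : 0 < Z := Finset.sum_pos (fun i _ => Real.exp_pos _)
    (by
      have : Nonempty (Fin n) := Fin.pos_iff_nonempty.mp hn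
      exact Finset.univ_nonempty)
  rw [hTA, hTAB, hTM]
  have hsum1 : ∑ i, Real.exp (a i) / Z = 1 := by
    rw [← Finset.sum_div, div_self hZ.ne']
  have jensen2 : Real.exp (∑ i, (Real.exp (a i) / Z) * b i)
      ≤ ∑ i, (Real.exp (a i) / Z) * Real.exp (b i) :=
    PBaux.exp_sum_le Finset.univ (fun i => Real.exp (a i) / Z) b (fun i _ => div_nonneg (Real.exp_pos _).le hZ.le) hsum1
  have hmid : ∑ i, (Real.exp (a i) / Z) * Real.exp (b i) = (∑ i, Real.exp (a i + b i)) / Z := by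
    rw [Finset.sum_div]
    exact Finset.sum_congr rfl fun i _ => by rw [Real.exp_add]; ring
  have hXZ : (∑ i, Real.exp (a i) * b i) / Z = ∑ i, (Real.exp (a i) / Z) * b i := by
    rw [Finset.sum_div]
    exact Finset.sum_congr rfl fun i _ => by ring
  rw [hXZ]
  have final : Real.exp (∑ i, (Real.exp (a i) / Z) * b i) ≤ (∑ j, Real.exp (m j)) / Z := by
    refine jensen2.trans ?_
    rw [hmid]
    exact (div_le_div_iff_of_pos_right hZ).mpr peierls
  calc ∑ i, (Real.exp (a i) / Z) * b i
      = Real.log (Real.exp (∑ i, (Real.exp (a i) / Z) * b i)) := (Real.log_exp _).symm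
    _ ≤ Real.log ((∑ j, Real.exp (m j)) / Z) := Real.log_le_log (Real.exp_pos _) final
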